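/- arXiv:1205.6056 — 2 statements merged into one kernel-verified Lean document; each statement's English description precedes it below -/
import Mathlib

section
/- For all integers n ≥ 1 and k ≥ 2, the number of parameter tuples whose associated n-times persymmetric 2n×k matrix over 𝔽₂ has rank 1 is Γ_1(n,k) = 3·(2^n − 1). -/
open Finset

/-- The `2n × k` n-times persymmetric matrix over `F_2` associated to a parameter tuple
`alpha ∈ (F_2^{k+1})^n` : for `1 ≤ j ≤ n`, rows `2j-1` and `2j` are
`(alpha^(j)_1, ..., alpha^(j)_k)` and `(alpha^(j)_2, ..., alpha^(j)_{k+1})`. -/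
def persymMatrix (n k : ℕ) (α : Fin n → Fin (k + 1) → ZMod 2) :
    Matrix (Fin (2 * n)) (Fin k) (ZMod 2) :=
  Matrix.of fun r c =>
    α ⟨r.val / 2, by have := r.isLt; omega⟩ ⟨r.val % 2 + c.val, by have := c.isLt; omega⟩

/-- `Gamma n k i` is the number of parameter tuples `alpha ∈ (F_2^{k+1})^n` whose associated
n-times persymmetric `2n × k` matrix over `F_2` has rank `i`. -/
noncomputable def Gamma (n k i : ℕ) : ℕ :=
  Nat.card {α : Fin n → Fin (k + 1) → ZMod 2 // (persymMatrix n k α).rank = i}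

namespace GammaOne

lemma zmod2_cases (c : ZMod 2) : c = 0 ∨ c = 1 := by revert c; decide

open Module in
lemma matrix_rank_one_iff {m k : ℕ} (M : Matrix (Fin m) (Fin k) (ZMod 2)) :
    M.rank = 1 ↔ ∃ i₀, M i₀ ≠ 0 ∧ ∀ i, M i = 0 ∨ M i = M i₀ := by
  constructor
  · intro h
    have hM : M ≠ 0 := by
      rintro rfl; rw [Matrix.rank_zero] at h; omega
    obtain ⟨i₀, hi₀⟩ : ∃ i₀, M i₀ ≠ 0 := by
      by_contra hc; push_neg at hc
      exact hM (by ext i j; simp [congrFun (hc i) j])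
    refine ⟨i₀, hi₀, fun i => ?_⟩
    rw [Matrix.rank_eq_finrank_span_row, Matrix.row] at h
    have hle : Submodule.span (ZMod 2) {M i₀} ≤ Submodule.span (ZMod 2) (Set.range M) :=
      Submodule.span_mono (by exact Set.singleton_subset_iff.mpr ⟨i₀, rfl⟩)
    have heq : Submodule.span (ZMod 2) {M i₀} = Submodule.span (ZMod 2) (Set.range M) :=
      Submodule.eq_of_le_of_finrank_le hle (by rw [h, finrank_span_singleton hi₀])
    have hmem : M i ∈ Submodule.span (ZMod 2) {M i₀} := by
      rw [heq]; exact Submodule.subset_span ⟨i, rfl⟩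
    obtain ⟨c, hc⟩ := Submodule.mem_span_singleton.mp hmem
    rcases zmod2_cases c with rfl | rfl
    · left; rw [← hc, zero_smul]
    · right; rw [← hc, one_smul]
  · rintro ⟨i₀, hi₀, hrows⟩
    have heq : Submodule.span (ZMod 2) (Set.range M) = Submodule.span (ZMod 2) {M i₀} := by
      apply le_antisymm
      · rw [Submodule.span_le]
        rintro _ ⟨i, rfl⟩
        rcases hrows i with h | h
        · rw [h]; exact Submodule.zero_mem _
        · rw [h]; exact Submodule.subset_span rfl
      · exact Submodule.span_mono (by exact Set.singleton_subset_iff.mpr ⟨i₀, rfl⟩)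
    rw [Matrix.rank_eq_finrank_span_row, Matrix.row, heq, finrank_span_singleton hi₀]

section blocks
variable {k : ℕ}

def r1 (β : Fin (k+1) → ZMod 2) : Fin k → ZMod 2 := fun c => β ⟨c.val, Nat.lt_succ_of_lt c.isLt⟩
def r2 (β : Fin (k+1) → ZMod 2) : Fin k → ZMod 2 := fun c => β ⟨c.val + 1, Nat.succ_lt_succ c.isLt⟩

def wA : Fin (k+1) → ZMod 2 := fun i => if i.val = 0 then 1 else 0
def wB : Fin (k+1) → ZMod 2 := fun i => if i.val = k then 1 else 0
def wC : Fin (k+1) → ZMod 2 := fun _ => 1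
def vA : Fin k → ZMod 2 := fun c => if c.val = 0 then 1 else 0
def vB : Fin k → ZMod 2 := fun c => if c.val = k - 1 then 1 else 0
def vC : Fin k → ZMod 2 := fun _ => 1

lemma apply_congr (β : Fin (k+1) → ZMod 2) {i i' : Fin (k+1)} (h : i.val = i'.val) :
    β i = β i' := congrArg β (Fin.ext h)

lemma block_cases (hk : 1 ≤ k) (β : Fin (k+1) → ZMod 2) (v : Fin k → ZMod 2) (hv : v ≠ 0)
    (h1 : r1 β = 0 ∨ r1 β = v) (h2 : r2 β = 0 ∨ r2 β = v) :
    β = 0 ∨ (β = wA ∧ v = vA) ∨ (β = wB ∧ v = vB) ∨ (β = wC ∧ v = vC) := by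
  rcases h1 with h1 | h1 <;> rcases h2 with h2 | h2
  · -- rows 0,0 : β = 0
    left
    funext i
    by_cases hi : i.val < k
    · exact congrFun h1 ⟨i.val, hi⟩
    · have hik : i.val = k := by have := i.isLt; omega
      have h := congrFun h2 ⟨k-1, by omega⟩
      exact (apply_congr β (show i.val = (k-1)+1 by omega)).trans h
  · -- rows 0, v : β = wB, v = vB
    right; right; left
    have hβ : ∀ i : Fin (k+1), i.val < k → β i = 0 := fun i hi => congrFun h1 ⟨i.val, hi⟩
    have hv' : ∀ c : Fin k, v c = β ⟨c.val + 1, Nat.succ_lt_succ c.isLt⟩ :=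
      fun c => (congrFun h2 c).symm
    have hβk : β ⟨k, Nat.lt_succ_self k⟩ = 1 := by
      rcases zmod2_cases (β ⟨k, Nat.lt_succ_self k⟩) with h | h
      · exfalso; apply hv
        funext c
        rw [hv' c]
        by_cases hc : c.val + 1 < k
        · exact hβ _ hc
        · exact (apply_congr β (show c.val + 1 = k from by have := c.isLt; omega)).trans h
      · exact h
    constructor
    · funext i
      by_cases hi : i.val < k
      · rw [hβ i hi]
        show (0 : ZMod 2) = if i.val = k then 1 else 0
        rw [if_neg (by omega)]
      · have hik : i.val = k := by have := i.isLt; omega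
        rw [(apply_congr β (show i.val = k from hik) :
              β i = β ⟨k, Nat.lt_succ_self k⟩), hβk]
        show (1 : ZMod 2) = if i.val = k then 1 else 0
        rw [if_pos hik]
    · funext c
      rw [hv' c]
      by_cases hc : c.val + 1 < k
      · rw [hβ ⟨c.val + 1, Nat.succ_lt_succ c.isLt⟩ hc]
        show (0 : ZMod 2) = if c.val = k - 1 then 1 else 0
        rw [if_neg (by omega)]
      · have hck : c.val + 1 = k := by have := c.isLt; omega
        rw [(apply_congr β (show c.val + 1 = k from hck) :
              β ⟨c.val + 1, Nat.succ_lt_succ c.isLt⟩ = β ⟨k, Nat.lt_succ_self k⟩), hβk]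
        show (1 : ZMod 2) = if c.val = k - 1 then 1 else 0
        rw [if_pos (by omega)]
  · -- rows v, 0 : β = wA, v = vA
    right; left
    have hβ : ∀ i : Fin (k+1), 0 < i.val → β i = 0 := by
      intro i hi
      have h := congrFun h2 ⟨i.val - 1, by have := i.isLt; omega⟩
      exact (apply_congr β (show i.val = (i.val - 1) + 1 by omega)).trans h
    have hv' : ∀ c : Fin k, v c = β ⟨c.val, Nat.lt_succ_of_lt c.isLt⟩ :=
      fun c => (congrFun h1 c).symm
    have hβ0 : β ⟨0, Nat.succ_pos k⟩ = 1 := by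
      rcases zmod2_cases (β ⟨0, Nat.succ_pos k⟩) with h | h
      · exfalso; apply hv
        funext c
        rw [hv' c]
        by_cases hc : 0 < c.val
        · exact hβ _ hc
        · exact (apply_congr β (show c.val = 0 by omega)).trans h
      · exact h
    constructor
    · funext i
      by_cases hi : 0 < i.val
      · rw [hβ i hi]
        show (0 : ZMod 2) = if i.val = 0 then 1 else 0
        rw [if_neg (by omega)]
      · have hi0 : i.val = 0 := by omega
        rw [(apply_congr β (show i.val = 0 from hi0) :
              β i = β ⟨0, Nat.succ_pos k⟩), hβ0]
        show (1 : ZMod 2) = if i.val = 0 then 1 else 0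
        rw [if_pos hi0]
    · funext c
      rw [hv' c]
      by_cases hc : 0 < c.val
      · rw [hβ ⟨c.val, Nat.lt_succ_of_lt c.isLt⟩ hc]
        show (0 : ZMod 2) = if c.val = 0 then 1 else 0
        rw [if_neg (by omega)]
      · rw [(apply_congr β (show c.val = 0 by omega) :
              β ⟨c.val, Nat.lt_succ_of_lt c.isLt⟩ = β ⟨0, Nat.succ_pos k⟩), hβ0]
        show (1 : ZMod 2) = if c.val = 0 then 1 else 0
        rw [if_pos (by omega)]
  · -- rows v, v : β = wC, v = vC
    right; right; right
    have hconst : ∀ i : Fin (k+1), β i = β ⟨0, Nat.succ_pos k⟩ := by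
      intro i
      obtain ⟨iv, hiv⟩ := i
      induction iv with
      | zero => rfl
      | succ m ih =>
        have hm : m < k := by omega
        have e1 : β ⟨m+1, hiv⟩ = r2 β ⟨m, hm⟩ := rfl
        have e2 : r1 β ⟨m, hm⟩ = β ⟨m, Nat.lt_succ_of_lt hm⟩ := rfl
        rw [e1, h2, ← h1, e2, ih]
    have hβ0 : β ⟨0, Nat.succ_pos k⟩ = 1 := by
      rcases zmod2_cases (β ⟨0, Nat.succ_pos k⟩) with h | h
      · exfalso; apply hv
        funext c
        rw [← h1]
        exact (hconst _).trans h
      · exact h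
    constructor
    · funext i; rw [hconst i, hβ0]; rfl
    · funext c; rw [← h1]
      show β _ = 1
      rw [hconst _, hβ0]

-- computations of rows of special blocks
lemma r1_zero : r1 (0 : Fin (k+1) → ZMod 2) = 0 := by funext c; rfl
lemma r2_zero : r2 (0 : Fin (k+1) → ZMod 2) = 0 := by funext c; rfl

lemma r1_wA : r1 (wA : Fin (k+1) → ZMod 2) = vA := by
  funext c
  show (if c.val = 0 then (1:ZMod 2) else 0) = if c.val = 0 then 1 else 0
  rfl

lemma r2_wA : r2 (wA : Fin (k+1) → ZMod 2) = 0 := by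
  funext c
  show (if c.val + 1 = 0 then (1:ZMod 2) else 0) = 0
  rw [if_neg (by omega)]

lemma r1_wB : r1 (wB : Fin (k+1) → ZMod 2) = 0 := by
  funext c
  show (if c.val = k then (1:ZMod 2) else 0) = 0
  rw [if_neg (by have := c.isLt; omega)]

lemma r2_wB (hk : 1 ≤ k) : r2 (wB : Fin (k+1) → ZMod 2) = vB := by
  funext c
  show (if c.val + 1 = k then (1:ZMod 2) else 0) = if c.val = k - 1 then 1 else 0
  by_cases h : c.val + 1 = k
  · rw [if_pos h, if_pos (by omega)]
  · rw [if_neg h, if_neg (by have := c.isLt; omega)]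

lemma r1_wC : r1 (wC : Fin (k+1) → ZMod 2) = vC := rfl
lemma r2_wC : r2 (wC : Fin (k+1) → ZMod 2) = vC := rfl

lemma wA_ne_zero : (wA : Fin (k+1) → ZMod 2) ≠ 0 := by
  intro h
  have := congrFun h ⟨0, Nat.succ_pos k⟩
  rw [show wA (⟨0, Nat.succ_pos k⟩ : Fin (k+1)) = 1 from if_pos rfl] at this
  exact one_ne_zero this

lemma wB_ne_zero : (wB : Fin (k+1) → ZMod 2) ≠ 0 := by
  intro h
  have := congrFun h ⟨k, Nat.lt_succ_self k⟩
  rw [show wB (⟨k, Nat.lt_succ_self k⟩ : Fin (k+1)) = 1 from if_pos rfl] at this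
  exact one_ne_zero this

lemma wC_ne_zero : (wC : Fin (k+1) → ZMod 2) ≠ 0 := by
  intro h
  have := congrFun h ⟨0, Nat.succ_pos k⟩
  exact one_ne_zero this

lemma vA_ne_zero (hk : 1 ≤ k) : (vA : Fin k → ZMod 2) ≠ 0 := by
  intro h
  have := congrFun h ⟨0, hk⟩
  rw [show vA (⟨0, hk⟩ : Fin k) = 1 from if_pos rfl] at this
  exact one_ne_zero this

lemma vB_ne_zero (hk : 1 ≤ k) : (vB : Fin k → ZMod 2) ≠ 0 := by
  intro h
  have := congrFun h ⟨k - 1, by omega⟩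
  rw [show vB (⟨k - 1, by omega⟩ : Fin k) = 1 from if_pos rfl] at this
  exact one_ne_zero this

lemma vC_ne_zero (hk : 1 ≤ k) : (vC : Fin k → ZMod 2) ≠ 0 := by
  intro h
  have := congrFun h ⟨0, hk⟩
  exact one_ne_zero this

lemma vA_ne_vB (hk : 2 ≤ k) : (vA : Fin k → ZMod 2) ≠ vB := by
  intro h
  have := congrFun h ⟨0, by omega⟩
  rw [show vA (⟨0, by omega⟩ : Fin k) = 1 from if_pos rfl,
      show vB (⟨0, by omega⟩ : Fin k) = 0 from if_neg (show ¬((0:ℕ) = k - 1) by omega)] at this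
  exact one_ne_zero this

lemma vA_ne_vC (hk : 2 ≤ k) : (vA : Fin k → ZMod 2) ≠ vC := by
  intro h
  have := congrFun h ⟨1, by omega⟩
  rw [show vA (⟨1, by omega⟩ : Fin k) = 0 from if_neg (show ¬((1:ℕ) = 0) by omega)] at this
  exact one_ne_zero this.symm

lemma vB_ne_vC (hk : 2 ≤ k) : (vB : Fin k → ZMod 2) ≠ vC := by
  intro h
  have := congrFun h ⟨0, by omega⟩
  rw [show vB (⟨0, by omega⟩ : Fin k) = 0 from if_neg (show ¬((0:ℕ) = k - 1) by omega)] at this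
  exact one_ne_zero this.symm

lemma wA_ne_wB (hk : 1 ≤ k) : (wA : Fin (k+1) → ZMod 2) ≠ wB := by
  intro h
  have := congrFun h ⟨0, Nat.succ_pos k⟩
  rw [show wA (⟨0, Nat.succ_pos k⟩ : Fin (k+1)) = 1 from if_pos rfl,
      show wB (⟨0, Nat.succ_pos k⟩ : Fin (k+1)) = 0 from if_neg (show ¬((0:ℕ) = k) by omega)] at this
  exact one_ne_zero this

lemma wA_ne_wC (hk : 1 ≤ k) : (wA : Fin (k+1) → ZMod 2) ≠ wC := by
  intro h
  have := congrFun h ⟨1, by omega⟩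
  rw [show wA (⟨1, by omega⟩ : Fin (k+1)) = 0 from if_neg (show ¬((1:ℕ) = 0) by omega)] at this
  exact one_ne_zero this.symm

lemma wB_ne_wC (hk : 1 ≤ k) : (wB : Fin (k+1) → ZMod 2) ≠ wC := by
  intro h
  have := congrFun h ⟨0, Nat.succ_pos k⟩
  rw [show wB (⟨0, Nat.succ_pos k⟩ : Fin (k+1)) = 0 from if_neg (show ¬((0:ℕ) = k) by omega)] at this
  exact one_ne_zero this.symm

end blocks

section rows
variable {n k : ℕ}

lemma apply2_congr (α : Fin n → Fin (k+1) → ZMod 2) {a b : Fin n} {x y : Fin (k+1)}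
    (h1 : a.val = b.val) (h2 : x.val = y.val) : α a x = α b y := by
  rw [Fin.ext h1, Fin.ext h2]

lemma row_eq_r1 (α : Fin n → Fin (k+1) → ZMod 2) (j : Fin n) (pf : 2 * j.val < 2 * n) :
    persymMatrix n k α ⟨2 * j.val, pf⟩ = r1 (α j) := by
  funext c
  exact apply2_congr α (show 2 * j.val / 2 = j.val by omega)
    (show 2 * j.val % 2 + c.val = c.val by omega)

lemma row_eq_r2 (α : Fin n → Fin (k+1) → ZMod 2) (j : Fin n) (pf : 2 * j.val + 1 < 2 * n) :
    persymMatrix n k α ⟨2 * j.val + 1, pf⟩ = r2 (α j) := by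
  funext c
  exact apply2_congr α (show (2 * j.val + 1) / 2 = j.val by omega)
    (show (2 * j.val + 1) % 2 + c.val = c.val + 1 by omega)

lemma row_cases (α : Fin n → Fin (k+1) → ZMod 2) (r : Fin (2 * n)) :
    ∃ j : Fin n, persymMatrix n k α r = r1 (α j) ∨ persymMatrix n k α r = r2 (α j) := by
  refine ⟨⟨r.val / 2, by have := r.isLt; omega⟩, ?_⟩
  have h2 : r.val % 2 < 2 := Nat.mod_lt _ (by omega)
  by_cases h : r.val % 2 = 0
  · left
    funext c
    exact apply2_congr α rfl (show r.val % 2 + c.val = c.val by omega)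
  · right
    funext c
    exact apply2_congr α rfl (show r.val % 2 + c.val = c.val + 1 by omega)

/-- the set of tuples all of whose blocks are `0` or `w`, not all `0` -/
def S (n k : ℕ) (w : Fin (k+1) → ZMod 2) : Set (Fin n → Fin (k+1) → ZMod 2) :=
  {α | α ≠ 0 ∧ ∀ j, α j = 0 ∨ α j = w}

lemma exists_ne_zero {α : Fin n → Fin (k+1) → ZMod 2} (h : α ≠ 0) : ∃ j, α j ≠ 0 := by
  by_contra hc; push_neg at hc; exact h (funext hc)

lemma rank_one_iff (hk : 2 ≤ k) (α : Fin n → Fin (k+1) → ZMod 2) :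
    (persymMatrix n k α).rank = 1 ↔ α ∈ S n k wA ∪ S n k wB ∪ S n k wC := by
  constructor
  · intro h
    obtain ⟨i₀, hi₀, hrows⟩ := (matrix_rank_one_iff _).mp h
    have hαne : α ≠ 0 := by
      rintro rfl
      apply hi₀
      obtain ⟨j, hj | hj⟩ := row_cases (0 : Fin n → Fin (k+1) → ZMod 2) i₀ <;>
        rw [hj] <;> funext c <;> rfl
    have hblocks : ∀ j, α j = 0 ∨ (α j = wA ∧ persymMatrix n k α i₀ = vA) ∨
        (α j = wB ∧ persymMatrix n k α i₀ = vB) ∨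
        (α j = wC ∧ persymMatrix n k α i₀ = vC) := by
      intro j
      apply block_cases (by omega) (α j) _ hi₀
      · rw [← row_eq_r1 α j (by have := j.isLt; omega)]
        exact hrows _
      · rw [← row_eq_r2 α j (by have := j.isLt; omega)]
        exact hrows _
    obtain ⟨j₀, hj₀⟩ := exists_ne_zero hαne
    rcases hblocks j₀ with h0 | ⟨hA, hvA⟩ | ⟨hB, hvB⟩ | ⟨hC, hvC⟩
    · exact absurd h0 hj₀
    · left; left
      refine ⟨hαne, fun j => ?_⟩
      rcases hblocks j with h0 | ⟨hw, _⟩ | ⟨_, hv'⟩ | ⟨_, hv'⟩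
      · exact Or.inl h0
      · exact Or.inr hw
      · exact absurd (hvA.symm.trans hv') (vA_ne_vB hk)
      · exact absurd (hvA.symm.trans hv') (vA_ne_vC hk)
    · left; right
      refine ⟨hαne, fun j => ?_⟩
      rcases hblocks j with h0 | ⟨_, hv'⟩ | ⟨hw, _⟩ | ⟨_, hv'⟩
      · exact Or.inl h0
      · exact absurd (hv'.symm.trans hvB) (vA_ne_vB hk)
      · exact Or.inr hw
      · exact absurd (hvB.symm.trans hv') (vB_ne_vC hk)
    · right
      refine ⟨hαne, fun j => ?_⟩
      rcases hblocks j with h0 | ⟨_, hv'⟩ | ⟨_, hv'⟩ | ⟨hw, _⟩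
      · exact Or.inl h0
      · exact absurd (hv'.symm.trans hvC) (vA_ne_vC hk)
      · exact absurd (hv'.symm.trans hvC) (vB_ne_vC hk)
      · exact Or.inr hw
  · intro hmem
    apply (matrix_rank_one_iff _).mpr
    rcases hmem with (⟨hne, hall⟩ | ⟨hne, hall⟩) | ⟨hne, hall⟩
    · -- type A
      obtain ⟨j₀, hj₀⟩ := exists_ne_zero hne
      have hj₀A : α j₀ = wA := (hall j₀).resolve_left hj₀
      refine ⟨⟨2 * j₀.val, by have := j₀.isLt; omega⟩, ?_, ?_⟩
      · rw [row_eq_r1 α j₀ _, hj₀A, r1_wA]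
        exact vA_ne_zero (by omega)
      · intro r
        rw [row_eq_r1 α j₀ _, hj₀A, r1_wA]
        obtain ⟨j, hj | hj⟩ := row_cases α r
        · rcases hall j with h0 | hw
          · rw [hj, h0, r1_zero]; exact Or.inl rfl
          · rw [hj, hw, r1_wA]; exact Or.inr rfl
        · rcases hall j with h0 | hw
          · rw [hj, h0, r2_zero]; exact Or.inl rfl
          · rw [hj, hw, r2_wA]; exact Or.inl rfl
    · -- type B
      obtain ⟨j₀, hj₀⟩ := exists_ne_zero hne
      have hj₀B : α j₀ = wB := (hall j₀).resolve_left hj₀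
      refine ⟨⟨2 * j₀.val + 1, by have := j₀.isLt; omega⟩, ?_, ?_⟩
      · rw [row_eq_r2 α j₀ _, hj₀B, r2_wB (by omega)]
        exact vB_ne_zero (by omega)
      · intro r
        rw [row_eq_r2 α j₀ _, hj₀B, r2_wB (by omega)]
        obtain ⟨j, hj | hj⟩ := row_cases α r
        · rcases hall j with h0 | hw
          · rw [hj, h0, r1_zero]; exact Or.inl rfl
          · rw [hj, hw, r1_wB]; exact Or.inl rfl
        · rcases hall j with h0 | hw
          · rw [hj, h0, r2_zero]; exact Or.inl rfl
          · rw [hj, hw, r2_wB (by omega)]; exact Or.inr rfl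
    · -- type C
      obtain ⟨j₀, hj₀⟩ := exists_ne_zero hne
      have hj₀C : α j₀ = wC := (hall j₀).resolve_left hj₀
      refine ⟨⟨2 * j₀.val, by have := j₀.isLt; omega⟩, ?_, ?_⟩
      · rw [row_eq_r1 α j₀ _, hj₀C, r1_wC]
        exact vC_ne_zero (by omega)
      · intro r
        rw [row_eq_r1 α j₀ _, hj₀C, r1_wC]
        obtain ⟨j, hj | hj⟩ := row_cases α r
        · rcases hall j with h0 | hw
          · rw [hj, h0, r1_zero]; exact Or.inl rfl
          · rw [hj, hw, r1_wC]; exact Or.inr rfl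
        · rcases hall j with h0 | hw
          · rw [hj, h0, r2_zero]; exact Or.inl rfl
          · rw [hj, hw, r2_wC]; exact Or.inr rfl

lemma card_S (w : Fin (k+1) → ZMod 2) (hw : w ≠ 0) : (S n k w).ncard = 2 ^ n - 1 := by
  classical
  have hdiff : S n k w = {α : Fin n → Fin (k+1) → ZMod 2 | ∀ j, α j = 0 ∨ α j = w} \ {0} := by
    ext α
    simp only [S, Set.mem_setOf_eq, Set.mem_diff, Set.mem_singleton_iff]
    tauto
  have h2 : Nat.card {b : Fin (k+1) → ZMod 2 // b = 0 ∨ b = w} = 2 := by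
    have e : {b : Fin (k+1) → ZMod 2 // b = 0 ∨ b = w} ≃
        ↥({0, w} : Set (Fin (k+1) → ZMod 2)) :=
      Equiv.subtypeEquivRight (fun b => by simp [Set.mem_insert_iff])
    rw [Nat.card_congr e, Nat.card_coe_set_eq, Set.ncard_pair (Ne.symm hw)]
  have hT : ({α : Fin n → Fin (k+1) → ZMod 2 | ∀ j, α j = 0 ∨ α j = w}).ncard = 2 ^ n := by
    rw [← Nat.card_coe_set_eq]
    have e : ↥({α : Fin n → Fin (k+1) → ZMod 2 | ∀ j, α j = 0 ∨ α j = w}) ≃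
        (Fin n → {b : Fin (k+1) → ZMod 2 // b = 0 ∨ b = w}) :=
      (Equiv.subtypeEquivRight (fun α => Iff.rfl)).trans
        (Equiv.subtypePiEquivPi (p := fun _ b => b = 0 ∨ b = w))
    rw [Nat.card_congr e, Nat.card_pi]
    simp only [h2, Finset.prod_const, Finset.card_univ, Fintype.card_fin]
  have h0mem : (0 : Fin n → Fin (k+1) → ZMod 2) ∈
      {α : Fin n → Fin (k+1) → ZMod 2 | ∀ j, α j = 0 ∨ α j = w} := fun j => Or.inl rfl
  rw [hdiff, Set.ncard_diff_singleton_of_mem h0mem, hT]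

lemma S_disjoint {w w' : Fin (k+1) → ZMod 2} (hne : w ≠ w') :
    Disjoint (S n k w) (S n k w') := by
  rw [Set.disjoint_left]
  rintro α ⟨hα, h1⟩ ⟨_, h2⟩
  obtain ⟨j, hj⟩ := exists_ne_zero hα
  rcases h1 j with h | h
  · exact hj h
  · rcases h2 j with h' | h'
    · exact hj h'
    · exact hne (h.symm.trans h')

end rows

end GammaOne

open GammaOne in
theorem gamma_one (n k : ℕ) (hn : 1 ≤ n) (hk : 2 ≤ k) :
    Gamma n k 1 = 3 * (2 ^ n - 1) := by
  classical
  have hG : Gamma n k 1 =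
      ({α : Fin n → Fin (k+1) → ZMod 2 | (persymMatrix n k α).rank = 1}).ncard :=
    Nat.card_coe_set_eq _
  have hset : {α : Fin n → Fin (k+1) → ZMod 2 | (persymMatrix n k α).rank = 1} =
      S n k wA ∪ S n k wB ∪ S n k wC :=
    Set.ext fun α => rank_one_iff hk α
  have hd1 : Disjoint (S n k wA) (S n k wB) := S_disjoint (wA_ne_wB (by omega))
  have hd2 : Disjoint (S n k wA ∪ S n k wB) (S n k wC) :=
    Set.disjoint_union_left.mpr ⟨S_disjoint (wA_ne_wC (by omega)),
      S_disjoint (wB_ne_wC (by omega))⟩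
  rw [hG, hset, Set.ncard_union_eq hd2 (Set.toFinite _) (Set.toFinite _),
    Set.ncard_union_eq hd1 (Set.toFinite _) (Set.toFinite _),
    card_S wA wA_ne_zero, card_S wB wB_ne_zero, card_S wC wC_ne_zero]
  have h1 : 1 ≤ 2 ^ n := Nat.one_le_two_pow
  omega
end

section
/- For all integers n ≥ 1 and k ≥ 1, the first moment identity holds: Σ_{i=0}^{min(2n,k)} Γ_i(n,k)·2^{k−i} = 2^{n+kn} + 2^{(k−1)n+k} − 2^{(k−1)n} (an identity of natural numbers; equivalently Σ_i Γ_i(n,k)·2^{−i} = 2^{n+k(n−1)} + 2^{(k−1)n} − 2^{(k−1)n−k}). -/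
open Finset Module




lemma zmod2_eq_one {a : ZMod 2} (h : a ≠ 0) : a = 1 := by
  revert a; decide

/-- The pair of linear functionals `β ↦ (∑ x c * β c, ∑ x c * β (c+1))`. -/
def phi (k : ℕ) (x : Fin k → ZMod 2) :
    (Fin (k + 1) → ZMod 2) →ₗ[ZMod 2] (ZMod 2 × ZMod 2) where
  toFun β := (∑ c, x c * β c.castSucc, ∑ c, x c * β c.succ)
  map_add' β γ := by
    simp [mul_add, Finset.sum_add_distrib, Prod.ext_iff]
  map_smul' r β := by
    simp [Finset.mul_sum, Prod.ext_iff, mul_left_comm]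

lemma phi_surj {k : ℕ} (x : Fin k → ZMod 2) (hx : x ≠ 0) :
    Function.Surjective (phi k x) := by
  classical
  set s : Finset (Fin k) := Finset.univ.filter (fun c => x c ≠ 0) with hs
  have hsne : s.Nonempty := by
    by_contra h
    rw [Finset.not_nonempty_iff_eq_empty, Finset.filter_eq_empty_iff] at h
    exact hx (funext fun c => by simpa using h (Finset.mem_univ c))
  obtain ⟨c0, hc0⟩ : ∃ c, c = s.min' hsne := ⟨_, rfl⟩
  obtain ⟨c1, hc1⟩ : ∃ c, c = s.max' hsne := ⟨_, rfl⟩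
  have hmem : ∀ c, c ∈ s ↔ x c ≠ 0 := by intro c; simp [hs]
  have hxc0 : x c0 = 1 := zmod2_eq_one ((hmem c0).1 (hc0 ▸ s.min'_mem hsne))
  have hxc1 : x c1 = 1 := zmod2_eq_one ((hmem c1).1 (hc1 ▸ s.max'_mem hsne))
  have hmin : ∀ c : Fin k, c < c0 → x c = 0 := by
    intro c hc
    by_contra h
    exact absurd (hc0 ▸ s.min'_le c ((hmem c).2 h)) (not_le.2 hc)
  have hmax : ∀ c : Fin k, c1 < c → x c = 0 := by
    intro c hc
    by_contra h
    exact absurd (hc1 ▸ s.le_max' c ((hmem c).2 h)) (not_le.2 hc)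
  -- u maps to (1,0), v maps to (0,1)
  set u : Fin (k+1) → ZMod 2 := Pi.single c0.castSucc 1 with hu
  set v : Fin (k+1) → ZMod 2 := Pi.single c1.succ 1 with hv
  have hphiu : phi k x u = (1, 0) := by
    simp only [phi, LinearMap.coe_mk, AddHom.coe_mk, Prod.ext_iff]
    constructor
    · rw [Fintype.sum_eq_single c0]
      · simp [hu, hxc0]
      · intro c hc
        rw [hu, Pi.single_apply, if_neg (by simp [Fin.castSucc_inj, hc]), mul_zero]
    · apply Finset.sum_eq_zero
      intro c _
      rw [hu, Pi.single_apply]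
      by_cases h : c.succ = c0.castSucc
      · have hlt : c < c0 := by
          have h2 := congrArg Fin.val h
          simp only [Fin.val_succ, Fin.coe_castSucc] at h2
          rw [Fin.lt_def]; omega
        rw [hmin c hlt, zero_mul]
      · rw [if_neg h, mul_zero]
  have hphiv : phi k x v = (0, 1) := by
    simp only [phi, LinearMap.coe_mk, AddHom.coe_mk, Prod.ext_iff]
    constructor
    · apply Finset.sum_eq_zero
      intro c _
      rw [hv, Pi.single_apply]
      by_cases h : c.castSucc = c1.succ
      · have hlt : c1 < c := by
          have h2 := congrArg Fin.val h
          simp only [Fin.val_succ, Fin.coe_castSucc] at h2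
          rw [Fin.lt_def]; omega
        rw [hmax c hlt, zero_mul]
      · rw [if_neg h, mul_zero]
    · rw [Fintype.sum_eq_single c1]
      · simp [hv, hxc1]
      · intro c hc
        rw [hv, Pi.single_apply, if_neg (by simp [Fin.succ_inj, hc]), mul_zero]
  intro p
  refine ⟨p.1 • u + p.2 • v, ?_⟩
  rw [map_add, map_smul, map_smul, hphiu, hphiv]
  ext <;> simp

lemma ker_phi_card {k : ℕ} (x : Fin k → ZMod 2) (hx : x ≠ 0) :
    Nat.card {β : Fin (k+1) → ZMod 2 // phi k x β = 0} = 2 ^ (k - 1) := by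
  classical
  have hk : 1 ≤ k := by
    rcases Nat.eq_zero_or_pos k with h | h
    · exact absurd (funext fun c => absurd c.isLt (by omega)) hx
    · exact h
  have h1 : Nat.card {β : Fin (k+1) → ZMod 2 // phi k x β = 0}
      = Nat.card (LinearMap.ker (phi k x)) := by
    apply Nat.card_congr
    exact Equiv.subtypeEquiv (Equiv.refl _) (by simp [LinearMap.mem_ker])
  have : Fintype (LinearMap.ker (phi k x)) := Fintype.ofFinite _
  rw [h1, Nat.card_eq_fintype_card, card_eq_pow_finrank (K := ZMod 2), ZMod.card]
  congr 1
  have h3 := LinearMap.finrank_range_add_finrank_ker (phi k x)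
  rw [Module.finrank_pi] at h3
  simp only [Fintype.card_fin] at h3
  have hr : LinearMap.range (phi k x) = ⊤ :=
    LinearMap.range_eq_top.2 (phi_surj x hx)
  rw [hr, finrank_top] at h3
  have h4 : finrank (ZMod 2) (ZMod 2 × ZMod 2) = 2 := by
    simp [Module.finrank_prod]
  rw [h4] at h3
  omega

lemma persym_row0 (n k : ℕ) (α : Fin n → Fin (k + 1) → ZMod 2) (x : Fin k → ZMod 2)
    (j : Fin n) (hlt : 2 * j.val < 2 * n) :
    (persymMatrix n k α).mulVec x ⟨2 * j.val, hlt⟩ = ∑ c, x c * α j c.castSucc := by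
  simp only [Matrix.mulVec, dotProduct, persymMatrix, Matrix.of_apply]
  apply Finset.sum_congr rfl
  intro c _
  have key : ∀ (a : Fin n) (b : Fin (k+1)), a = j → b = c.castSucc →
      α a b * x c = x c * α j c.castSucc := by
    rintro a b rfl rfl; ring
  apply key <;> (apply Fin.ext; simp only [Fin.val_mk, Fin.coe_castSucc, Fin.val_succ]; omega)

lemma persym_row1 (n k : ℕ) (α : Fin n → Fin (k + 1) → ZMod 2) (x : Fin k → ZMod 2)
    (j : Fin n) (hlt : 2 * j.val + 1 < 2 * n) :
    (persymMatrix n k α).mulVec x ⟨2 * j.val + 1, hlt⟩ = ∑ c, x c * α j c.succ := by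
  simp only [Matrix.mulVec, dotProduct, persymMatrix, Matrix.of_apply]
  apply Finset.sum_congr rfl
  intro c _
  have key : ∀ (a : Fin n) (b : Fin (k+1)), a = j → b = c.succ →
      α a b * x c = x c * α j c.succ := by
    rintro a b rfl rfl; ring
  apply key <;> (apply Fin.ext; simp only [Fin.val_mk, Fin.coe_castSucc, Fin.val_succ]; omega)

lemma phi_eq_zero_iff {k : ℕ} (x : Fin k → ZMod 2) (β : Fin (k+1) → ZMod 2) :
    phi k x β = 0 ↔ (∑ c, x c * β c.castSucc = 0 ∧ ∑ c, x c * β c.succ = 0) := by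
  simp [phi, Prod.ext_iff]

lemma mulVec_persym_iff (n k : ℕ) (α : Fin n → Fin (k + 1) → ZMod 2)
    (x : Fin k → ZMod 2) :
    (persymMatrix n k α).mulVec x = 0 ↔ ∀ j : Fin n, phi k x (α j) = 0 := by
  constructor
  · intro h j
    rw [phi_eq_zero_iff]
    have hlt0 : 2 * j.val < 2 * n := by have := j.isLt; omega
    have hlt1 : 2 * j.val + 1 < 2 * n := by have := j.isLt; omega
    have h1 := congrFun h ⟨2 * j.val, hlt0⟩
    have h2 := congrFun h ⟨2 * j.val + 1, hlt1⟩
    rw [persym_row0 n k α x j hlt0] at h1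
    rw [persym_row1 n k α x j hlt1] at h2
    exact ⟨h1, h2⟩
  · intro h
    funext r
    have hjlt : r.val / 2 < n := by have := r.isLt; omega
    have hzero := (phi_eq_zero_iff x (α ⟨r.val / 2, hjlt⟩)).1 (h ⟨r.val / 2, hjlt⟩)
    rcases Nat.even_or_odd r.val with ⟨t, ht⟩ | ⟨t, ht⟩
    · have hlt : 2 * ((⟨r.val / 2, hjlt⟩ : Fin n) : ℕ) < 2 * n := by
        show 2 * (r.val / 2) < 2 * n
        omega
      have hr : r = ⟨2 * ((⟨r.val / 2, hjlt⟩ : Fin n) : ℕ), hlt⟩ := by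
        apply Fin.ext
        show r.val = 2 * (r.val / 2)
        omega
      rw [hr, persym_row0 n k α x ⟨r.val / 2, hjlt⟩ hlt]
      simpa using hzero.1
    · have hlt : 2 * ((⟨r.val / 2, hjlt⟩ : Fin n) : ℕ) + 1 < 2 * n := by
        show 2 * (r.val / 2) + 1 < 2 * n
        have := r.isLt
        omega
      have hr : r = ⟨2 * ((⟨r.val / 2, hjlt⟩ : Fin n) : ℕ) + 1, hlt⟩ := by
        apply Fin.ext
        show r.val = 2 * (r.val / 2) + 1
        omega
      rw [hr, persym_row1 n k α x ⟨r.val / 2, hjlt⟩ hlt]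
      simpa using hzero.2

lemma card_sol (n k : ℕ) (x : Fin k → ZMod 2) (hx : x ≠ 0) :
    (Finset.univ.filter
        (fun α : Fin n → Fin (k+1) → ZMod 2 => (persymMatrix n k α).mulVec x = 0)).card
      = (2 ^ (k - 1)) ^ n := by
  classical
  have h1 : (Finset.univ.filter
        (fun α : Fin n → Fin (k+1) → ZMod 2 => (persymMatrix n k α).mulVec x = 0)).card
      = Fintype.card {α : Fin n → Fin (k+1) → ZMod 2 // ∀ j, phi k x (α j) = 0} := by
    rw [Fintype.card_subtype]
    congr 1
    apply Finset.filter_congr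
    intro α _
    simp [mulVec_persym_iff]
  rw [h1, Fintype.card_congr
    (Equiv.subtypePiEquivPi (β := fun _ : Fin n => Fin (k+1) → ZMod 2)
      (p := fun _ β => phi k x β = 0)), Fintype.card_pi]
  have h2 : ∀ j : Fin n, Fintype.card {β : Fin (k+1) → ZMod 2 // phi k x β = 0} = 2 ^ (k-1) := by
    intro j
    rw [← Nat.card_eq_fintype_card, ker_phi_card x hx]
  trans ∏ _j : Fin n, 2 ^ (k - 1)
  · exact Finset.prod_congr rfl (fun j _ => by convert h2 j)
  · simp

lemma kerCard {m k : ℕ} (M : Matrix (Fin m) (Fin k) (ZMod 2)) :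
    Nat.card {x : Fin k → ZMod 2 // M.mulVec x = 0} = 2 ^ (k - M.rank) := by
  have h1 : Nat.card {x : Fin k → ZMod 2 // M.mulVec x = 0}
      = Nat.card (LinearMap.ker M.mulVecLin) := by
    apply Nat.card_congr
    exact Equiv.subtypeEquiv (Equiv.refl _) (by simp [LinearMap.mem_ker])
  classical
  have : Fintype (LinearMap.ker M.mulVecLin) := Fintype.ofFinite _
  rw [h1]
  have h2 : Nat.card (LinearMap.ker M.mulVecLin)
      = 2 ^ finrank (ZMod 2) (LinearMap.ker M.mulVecLin) := by
    rw [Nat.card_eq_fintype_card, card_eq_pow_finrank (K := ZMod 2), ZMod.card]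
  rw [h2]
  congr 1
  have h3 := LinearMap.finrank_range_add_finrank_ker M.mulVecLin
  rw [Module.finrank_pi] at h3
  simp only [Fintype.card_fin] at h3
  have : M.rank = finrank (ZMod 2) (LinearMap.range M.mulVecLin) := rfl
  omega



theorem gamma_first_moment (n k : ℕ) (hn : 1 ≤ n) (hk : 1 ≤ k) :
    ∑ i ∈ Finset.range (min (2 * n) k + 1), Gamma n k i * 2 ^ (k - i)
      = 2 ^ (n + k * n) + 2 ^ ((k - 1) * n + k) - 2 ^ ((k - 1) * n) := by
  classical
  have hGamma : ∀ i, Gamma n k i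
      = (Finset.univ.filter (fun α : Fin n → Fin (k+1) → ZMod 2 =>
          (persymMatrix n k α).rank = i)).card := by
    intro i
    rw [Gamma, Nat.card_eq_fintype_card, Fintype.card_subtype]
  have hmaps : ∀ α : Fin n → Fin (k+1) → ZMod 2, α ∈ Finset.univ →
      (persymMatrix n k α).rank ∈ Finset.range (min (2*n) k + 1) := by
    intro α _
    rw [Finset.mem_range]
    have h1 := Matrix.rank_le_width (persymMatrix n k α)
    have h2 := Matrix.rank_le_height (persymMatrix n k α)
    omega
  have step1 : ∑ i ∈ Finset.range (min (2 * n) k + 1), Gamma n k i * 2 ^ (k - i)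
      = ∑ α : Fin n → Fin (k+1) → ZMod 2, 2 ^ (k - (persymMatrix n k α).rank) := by
    rw [← Finset.sum_fiberwise_of_maps_to hmaps
        (fun α => 2 ^ (k - (persymMatrix n k α).rank))]
    apply Finset.sum_congr rfl
    intro i _
    rw [hGamma i]
    calc #(Finset.univ.filter (fun α : Fin n → Fin (k+1) → ZMod 2 =>
            (persymMatrix n k α).rank = i)) * 2 ^ (k - i)
        = ∑ α ∈ Finset.univ.filter (fun α : Fin n → Fin (k+1) → ZMod 2 =>
            (persymMatrix n k α).rank = i), 2 ^ (k - i) := by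
          rw [Finset.sum_const, smul_eq_mul]
      _ = ∑ α ∈ Finset.univ.filter (fun α : Fin n → Fin (k+1) → ZMod 2 =>
            (persymMatrix n k α).rank = i), 2 ^ (k - (persymMatrix n k α).rank) :=
          Finset.sum_congr rfl (fun α hα => by rw [(Finset.mem_filter.1 hα).2])
  have step2 : ∀ α : Fin n → Fin (k+1) → ZMod 2,
      (2:ℕ) ^ (k - (persymMatrix n k α).rank)
        = (Finset.univ.filter (fun x : Fin k → ZMod 2 =>
            (persymMatrix n k α).mulVec x = 0)).card := by
    intro α
    rw [← kerCard (persymMatrix n k α), Nat.card_eq_fintype_card, Fintype.card_subtype]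
  have step3 : ∑ α : Fin n → Fin (k+1) → ZMod 2,
      (Finset.univ.filter (fun x : Fin k → ZMod 2 =>
          (persymMatrix n k α).mulVec x = 0)).card
      = ∑ x : Fin k → ZMod 2,
        (Finset.univ.filter (fun α : Fin n → Fin (k+1) → ZMod 2 =>
          (persymMatrix n k α).mulVec x = 0)).card := by
    simp_rw [Finset.card_filter]
    exact Finset.sum_comm
  have hx0 : (Finset.univ.filter (fun α : Fin n → Fin (k+1) → ZMod 2 =>
      (persymMatrix n k α).mulVec (0 : Fin k → ZMod 2) = 0)).card = 2 ^ ((k+1) * n) := by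
    have he : (Finset.univ.filter (fun α : Fin n → Fin (k+1) → ZMod 2 =>
        (persymMatrix n k α).mulVec (0 : Fin k → ZMod 2) = 0)) = Finset.univ := by
      apply Finset.filter_true_of_mem
      intro α _
      exact Matrix.mulVec_zero _
    rw [he, Finset.card_univ, Fintype.card_pi]
    have : ∀ j : Fin n, Fintype.card (Fin (k+1) → ZMod 2) = 2 ^ (k+1) := by
      intro j
      rw [Fintype.card_pi]
      simp [ZMod.card]
    rw [Finset.prod_congr rfl (fun j _ => this j), Finset.prod_const, Finset.card_univ,
      Fintype.card_fin, ← pow_mul]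
  have hsum : ∑ x : Fin k → ZMod 2,
      (Finset.univ.filter (fun α : Fin n → Fin (k+1) → ZMod 2 =>
          (persymMatrix n k α).mulVec x = 0)).card
      = 2 ^ ((k+1) * n) + (2 ^ k - 1) * 2 ^ ((k-1) * n) := by
    rw [← Finset.add_sum_erase Finset.univ _ (Finset.mem_univ (0 : Fin k → ZMod 2)), hx0]
    congr 1
    have herase : ∀ x ∈ Finset.univ.erase (0 : Fin k → ZMod 2),
        (Finset.univ.filter (fun α : Fin n → Fin (k+1) → ZMod 2 =>
          (persymMatrix n k α).mulVec x = 0)).card = 2 ^ ((k-1) * n) := by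
      intro x hx
      rw [card_sol n k x (Finset.ne_of_mem_erase hx), ← pow_mul]
    rw [Finset.sum_congr rfl herase, Finset.sum_const, smul_eq_mul]
    congr 1
    rw [Finset.card_erase_of_mem (Finset.mem_univ _), Finset.card_univ, Fintype.card_pi]
    simp [ZMod.card]
  rw [step1, Finset.sum_congr rfl (fun α _ => step2 α), step3, hsum]
  have e1 : (k+1) * n = n + k * n := by ring
  have e2 : (2^k - 1) * 2 ^ ((k-1)*n) = 2 ^ ((k-1)*n + k) - 2 ^ ((k-1)*n) := by
    rw [Nat.sub_mul, one_mul, ← pow_add, Nat.add_comm k ((k-1)*n)]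
  have e3 : (2:ℕ) ^ ((k-1)*n) ≤ 2 ^ ((k-1)*n + k) := Nat.pow_le_pow_right (by norm_num) (by omega)
  rw [e1] at hsum ⊢
  omega
end
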